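/- Let G be a finite simple graph, s a vertex of G, and S = (v_1, …, v_t) a minimal valid strategy for the firefighting process on (G, s) with t ≥ 1. Then G contains an induced path starting at s with at least t + 1 vertices; moreover, such a path can be chosen ending at v_t so that every vertex on it other than v_t is burned by S. -/

import Mathlib

open SimpleGraph

variable {V : Type*}

/-- The set of vertices burned by the end of time step `i` (0-indexed: `burnt G s S i` is `B_i`),
when a fire starts at `s` and the firefighter defends the vertices of the list `S` in order. -/
def burnt (G : SimpleGraph V) (s : V) (S : List V) : ℕ → Set V
  | 0 => {s}
  | i + 1 => burnt G s S i ∪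
      {u | u ∉ S.take (i + 1) ∧ ∃ b ∈ burnt G s S i, G.Adj u b}

/-- The set of all vertices ever burned by the strategy `S`. -/
def BurntSet (G : SimpleGraph V) (s : V) (S : List V) : Set V := ⋃ i, burnt G s S i

/-- A strategy is a sequence of pairwise distinct vertices; it is valid if the vertex defended
at each step is not yet burning at the start of that step. -/
def ValidStrategy (G : SimpleGraph V) (s : V) (S : List V) : Prop :=
  S.Nodup ∧ ∀ (i : ℕ) (h : i < S.length), S.get ⟨i, h⟩ ∉ burnt G s S i

/-- The number of vertices saved (i.e. not burned) by the strategy `S`. -/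
noncomputable def sav (G : SimpleGraph V) (s : V) (S : List V) : ℕ := (BurntSet G s S)ᶜ.ncard

/-- A valid strategy is minimal if every proper subsequence of it which is itself a valid
strategy saves strictly fewer vertices. -/
def MinimalStrategy (G : SimpleGraph V) (s : V) (S : List V) : Prop :=
  ValidStrategy G s S ∧ ∀ S' : List V, S'.Sublist S → S' ≠ S → ValidStrategy G s S' →
    sav G s S' < sav G s S

/-- A strategy is optimal if it is minimal and saves the maximum number of vertices. -/
def OptimalStrategy (G : SimpleGraph V) (s : V) (S : List V) : Prop :=
  MinimalStrategy G s S ∧ ∀ S' : List V, ValidStrategy G s S' → sav G s S' ≤ sav G s S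

/-- A walk is an induced path if it is a path and the subgraph induced on its vertices has no
edges besides the edges of the path. -/
def IsInducedPath (G : SimpleGraph V) {a b : V} (p : G.Walk a b) : Prop :=
  p.IsPath ∧ ∀ x ∈ p.support, ∀ y ∈ p.support, G.Adj x y → p.toSubgraph.Adj x y

/-- `u` is reachable from `s` in the subgraph of `G` induced on the complement of `A`. -/
def ReachAvoiding (G : SimpleGraph V) (A : Set V) (s u : V) : Prop :=
  ∃ p : G.Walk s u, ∀ x ∈ p.support, x ∉ A

section Lemmas
variable {G : SimpleGraph V} {s : V} {S : List V}

lemma burnt_mono {i j : ℕ} (h : i ≤ j) : burnt G s S i ⊆ burnt G s S j := by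
  induction j with
  | zero =>
    have : i = 0 := by omega
    subst this; exact subset_rfl
  | succ n ih =>
    rcases Nat.lt_or_ge i (n+1) with h' | h'
    · exact (ih (by omega)).trans Set.subset_union_left
    · have : i = n + 1 := by omega
      subst this; exact subset_rfl

lemma s_mem_burnt (i : ℕ) : s ∈ burnt G s S i :=
  burnt_mono (Nat.zero_le i) rfl

lemma mem_burnt_succ {u b : V} {i : ℕ} (hu : u ∉ S) (hb : b ∈ burnt G s S i)
    (hadj : G.Adj u b) : u ∈ burnt G s S (i+1) :=
  Set.mem_union_right _ ⟨fun h => hu (List.take_subset _ _ h), b, hb, hadj⟩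

lemma get_not_mem_burnt (hval : ValidStrategy G s S) {k : ℕ} (hk : k < S.length) (i : ℕ) :
    S.get ⟨k, hk⟩ ∉ burnt G s S i := by
  have base : ∀ j, S.get ⟨k, hk⟩ ∉ burnt G s S (k + j) := by
    intro j
    induction j with
    | zero => exact hval.2 k hk
    | succ n ih =>
      rintro (h | ⟨h1, -⟩)
      · exact ih h
      · apply h1
        have hlt : k < (S.take (k + n + 1)).length := by
          rw [List.length_take]; omega
        have h2 : (S.take (k + n + 1))[k] = S[k] := List.getElem_take
        show S.get ⟨k, hk⟩ ∈ List.take (k + n + 1) S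
        have := List.getElem_mem hlt
        rw [h2] at this
        simpa [List.get_eq_getElem] using this
  intro hmem
  rcases le_or_gt i k with h | h
  · exact base 0 (burnt_mono (by omega) hmem)
  · have := base (i - k)
    rw [Nat.add_sub_cancel' h.le] at this
    exact this hmem

lemma exists_walk_of_burnt : ∀ i, ∀ u ∈ burnt G s S i,
    ∃ p : G.Walk s u, ∀ x ∈ p.support, x ∈ burnt G s S i := by
  intro i
  induction i with
  | zero =>
    rintro u (rfl : u = s)
    exact ⟨Walk.nil, by simp; rfl⟩
  | succ n ih =>
    rintro u (h | ⟨hu, b, hb, hadj⟩)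
    · obtain ⟨p, hp⟩ := ih u h
      exact ⟨p, fun x hx => burnt_mono n.le_succ (hp x hx)⟩
    · obtain ⟨p, hp⟩ := ih b hb
      refine ⟨p.concat hadj.symm, ?_⟩
      intro x hx
      rw [Walk.support_concat, List.mem_append] at hx
      rcases hx with hx | hx
      · exact burnt_mono n.le_succ (hp x hx)
      · simp only [List.mem_singleton] at hx
        subst hx
        exact Set.mem_union_right _ ⟨hu, b, hb, hadj⟩

lemma mem_burnt_of_walk : ∀ {u : V} (p : G.Walk u s), (∀ x ∈ p.support, x ∉ S) →
    u ∈ burnt G s S p.length := by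
  intro u p
  induction p with
  | nil => intro _; exact rfl
  | @cons u w t h q ih =>
    intro hs
    have hw : w ∈ burnt G t S q.length := ih (fun x hx => hs x (by simp [hx]))
    exact mem_burnt_succ (hs u (by simp)) hw h

lemma sub_lemma_burnt_dropLast (hne : S ≠ [])
    (h : ∀ b ∈ BurntSet G s S, ¬ G.Adj (S.getLast hne) b) :
    ∀ i, burnt G s S.dropLast i = burnt G s S i := by
  have hSS : S.dropLast ++ [S.getLast hne] = S := List.dropLast_append_getLast hne
  have htake : ∀ (m : ℕ) (u : V), u ∈ S.take m ↔
      u ∈ S.dropLast.take m ∨ u ∈ ([S.getLast hne].take (m - S.dropLast.length)) := by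
    intro m u
    conv_lhs => rw [← hSS]
    rw [List.take_append, List.mem_append]
  intro i
  induction i with
  | zero => rfl
  | succ n ih =>
    show burnt G s S.dropLast n ∪ _ = burnt G s S n ∪ _
    rw [ih]
    congr 1
    ext u
    simp only [Set.mem_setOf_eq]
    constructor
    · rintro ⟨hu, b, hb, hadj⟩
      refine ⟨?_, b, hb, hadj⟩
      intro hmem
      rcases (htake _ _).1 hmem with h1 | h1
      · exact hu h1
      · have hua : u = S.getLast hne := by
          have := List.take_subset _ _ h1
          simpa using this
        subst hua
        exact h b (Set.mem_iUnion.2 ⟨n, hb⟩) hadj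
    · rintro ⟨hu, b, hb, hadj⟩
      exact ⟨fun h1 => hu ((htake _ _).2 (Or.inl h1)), b, hb, hadj⟩

lemma last_adj_burntSet (hS : MinimalStrategy G s S) (hne : S ≠ []) :
    ∃ b ∈ BurntSet G s S, G.Adj (S.getLast hne) b := by
  by_contra hcon
  push_neg at hcon
  have key := sub_lemma_burnt_dropLast hne hcon
  have hBS : BurntSet G s S.dropLast = BurntSet G s S := by
    unfold BurntSet
    exact Set.iUnion_congr key
  have hval' : ValidStrategy G s S.dropLast := by
    constructor
    · exact (List.dropLast_sublist S).nodup hS.1.1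
    · intro i hi
      have hi' : i < S.length := lt_of_lt_of_le hi (by rw [List.length_dropLast]; omega)
      have hget : S.dropLast.get ⟨i, hi⟩ = S.get ⟨i, hi'⟩ := by
        simp [List.get_eq_getElem, List.getElem_dropLast]
      rw [hget, key]
      exact hS.1.2 i hi'
  have hne' : S.dropLast ≠ S := by
    intro hEq
    have h1 := congrArg List.length hEq
    rw [List.length_dropLast] at h1
    have h2 : S.length ≠ 0 := by simpa using hne
    omega
  have hlt := hS.2 S.dropLast (List.dropLast_sublist S) hne' hval'
  rw [show sav G s S.dropLast = sav G s S from by unfold sav; rw [hBS]] at hlt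
  exact lt_irrefl _ hlt

variable [DecidableEq V]

lemma one_length_edge {a b : V} (w : G.Walk a b) (hw : w.length = 1) : s(a, b) ∈ w.edges := by
  cases w with
  | nil => simp at hw
  | cons h q =>
    have h0 : q.length = 0 := by simpa using hw
    have hb := Walk.eq_of_length_eq_zero h0
    subst hb
    simp

lemma takeUntil_support_prefix {a b x : V} (p : G.Walk a b) (hx : x ∈ p.support) :
    (p.takeUntil x hx).support <+: p.support :=
  ⟨(p.dropUntil x hx).support.tail, by rw [← Walk.support_append, Walk.take_spec]⟩

lemma getLast_takeUntil_support {a b x : V} (p : G.Walk a b) (hx : x ∈ p.support) :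
    (p.takeUntil x hx).support.getLast (by simp) = x :=
  Walk.getLast_support _

lemma eq_of_mem_takeUntil_prefix {a b : V} {p : G.Walk a b} (hnd : p.support.Nodup)
    {x y : V} (hx : x ∈ p.support) (hy : y ∈ p.support)
    (hpre : (p.takeUntil x hx).support <+: (p.takeUntil y hy).support)
    (hyx : y ∈ (p.takeUntil x hx).support) : x = y := by
  obtain ⟨r, hr⟩ := hpre
  rcases List.eq_nil_or_concat r with rfl | ⟨r', c, hrc⟩
  · rw [List.append_nil] at hr
    calc x = (p.takeUntil x hx).support.getLast (by simp) := (getLast_takeUntil_support p hx).symm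
    _ = (p.takeUntil y hy).support.getLast (by simp [← hr]) := by congr 1
    _ = y := getLast_takeUntil_support p hy
  · exfalso
    rw [List.concat_eq_append] at hrc
    subst hrc
    have hnd2 : ((p.takeUntil y hy).support).Nodup :=
      (takeUntil_support_prefix p hy).sublist.nodup hnd
    rw [← hr] at hnd2
    have hdisj := (List.nodup_append'.mp hnd2).2.2
    have hyr : y ∈ r' ++ [c] := by
      have h5 : (p.takeUntil y hy).support.getLast? = some y := by
        rw [List.getLast?_eq_getLast (l := (p.takeUntil y hy).support) (by simp), getLast_takeUntil_support]
      rw [← hr, List.getLast?_append, List.getLast?_eq_getLast (l := r' ++ [c]) (by simp)] at h5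
      simp only [Option.or] at h5
      exact (Option.some_inj.mp h5) ▸ List.getLast_mem _
    exact hdisj hyx hyr

lemma mem_takeUntil_of_not_dropUntil {a b x z : V} {p : G.Walk a b} (hx : x ∈ p.support)
    (hz : z ∈ p.support) (h : z ∉ (p.dropUntil x hx).support) :
    z ∈ (p.takeUntil x hx).support := by
  have hspec := Walk.take_spec p hx
  rw [← hspec, Walk.mem_support_append_iff] at hz
  exact hz.resolve_right h

lemma mem_dropUntil_or {a b : V} {p : G.Walk a b} (hnd : p.support.Nodup) {x y : V}
    (hx : x ∈ p.support) (hy : y ∈ p.support) (hxy : x ≠ y) :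
    y ∈ (p.dropUntil x hx).support ∨ x ∈ (p.dropUntil y hy).support := by
  by_contra hc
  push_neg at hc
  have h1 : y ∈ (p.takeUntil x hx).support := mem_takeUntil_of_not_dropUntil hx hy hc.1
  have h2 : x ∈ (p.takeUntil y hy).support := mem_takeUntil_of_not_dropUntil hy hx hc.2
  rcases List.prefix_or_prefix_of_prefix (takeUntil_support_prefix p hx)
    (takeUntil_support_prefix p hy) with hp | hp
  · exact hxy (eq_of_mem_takeUntil_prefix hnd hx hy hp h1)
  · exact hxy (eq_of_mem_takeUntil_prefix hnd hy hx hp h2).symm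

lemma shorter_aux {a b : V} {p : G.Walk a b} {x y : V} (hx : x ∈ p.support)
    (hadj : G.Adj x y) (hns : ¬ p.toSubgraph.Adj x y)
    (hd : y ∈ (p.dropUntil x hx).support) :
    ∃ q : G.Walk a b, q.length < p.length ∧ q.support ⊆ p.support := by
  set t := p.takeUntil x hx with ht
  set d := p.dropUntil x hx with hdd
  set w := d.takeUntil y hd with hw
  set d' := d.dropUntil y hd with hd'
  have hlen2 : 2 ≤ w.length := by
    rcases Nat.lt_or_ge w.length 2 with h2 | h2
    · exfalso
      have : w.length = 0 ∨ w.length = 1 := by omega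
      rcases this with h0 | h1
      · exact hadj.ne (Walk.eq_of_length_eq_zero h0)
      · have he : s(x, y) ∈ w.edges := one_length_edge w h1
        have he2 : s(x, y) ∈ p.edges :=
          Walk.edges_dropUntil_subset p hx (Walk.edges_takeUntil_subset d hd he)
        exact hns ((p.mem_edges_toSubgraph).mpr he2)
    · exact h2
  refine ⟨t.append (Walk.cons hadj d'), ?_, ?_⟩
  · have h1 : p.length = t.length + d.length := by
      conv_lhs => rw [← Walk.take_spec p hx]
      rw [Walk.length_append]
    have h2 : d.length = w.length + d'.length := by
      conv_lhs => rw [← Walk.take_spec d hd]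
      rw [Walk.length_append]
    rw [Walk.length_append, Walk.length_cons]
    omega
  · intro z hz
    rw [Walk.mem_support_append_iff] at hz
    rcases hz with hz | hz
    · exact Walk.support_takeUntil_subset p hx hz
    · rw [Walk.support_cons, List.mem_cons] at hz
      rcases hz with rfl | hz
      · exact hx
      · exact Walk.support_dropUntil_subset p hx (Walk.support_dropUntil_subset d hd hz)

lemma exists_shorter_of_chord {a b : V} {p : G.Walk a b} (hp : p.IsPath) {x y : V}
    (hx : x ∈ p.support) (hy : y ∈ p.support) (hadj : G.Adj x y)
    (hns : ¬ p.toSubgraph.Adj x y) :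
    ∃ q : G.Walk a b, q.length < p.length ∧ q.support ⊆ p.support := by
  rcases mem_dropUntil_or hp.support_nodup hx hy hadj.ne with hd | hd
  · exact shorter_aux hx hadj hns hd
  · exact shorter_aux hy hadj.symm (fun h => hns h.symm) hd

end Lemmas

/-- If `S = (v₁, …, v_t)` is a minimal valid strategy with `t ≥ 1`, then `G`
contains an induced path starting at `s` with at least `t + 1` vertices; moreover such a path
can be chosen ending at `v_t` with every vertex other than `v_t` burned by `S`. -/
theorem minimal_strategy_induced_path {V : Type*} [Fintype V] (G : SimpleGraph V) (s : V)
    (S : List V) (hS : MinimalStrategy G s S) (hne : S ≠ []) :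
    ∃ p : G.Walk s (S.getLast hne), IsInducedPath G p ∧
      S.length + 1 ≤ p.support.length ∧
      ∀ x ∈ p.support, x ≠ S.getLast hne → x ∈ BurntSet G s S := by
  classical
  obtain ⟨hval, hmin⟩ := hS
  set v := S.getLast hne with hv
  have hvS : v ∈ S := List.getLast_mem hne
  have hSB : ∀ u ∈ S, u ∉ BurntSet G s S := by
    intro u hu hub
    obtain ⟨⟨k, hk⟩, rfl⟩ := List.mem_iff_get.mp hu
    obtain ⟨i, hi⟩ := Set.mem_iUnion.mp hub
    exact get_not_mem_burnt hval hk i hi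
  have hsB : s ∈ BurntSet G s S := Set.mem_iUnion.2 ⟨0, rfl⟩
  have hvB : v ∉ BurntSet G s S := hSB v hvS
  have hvs : v ≠ s := fun h => hvB (h ▸ hsB)
  obtain ⟨b, hbB, hadj⟩ := last_adj_burntSet ⟨hval, hmin⟩ hne
  have hPne : ∃ n, ∃ p : G.Walk s v,
      (∀ x ∈ p.support, x ≠ v → x ∈ BurntSet G s S) ∧ p.length = n := by
    obtain ⟨i, hbi⟩ := Set.mem_iUnion.mp hbB
    obtain ⟨q, hq⟩ := exists_walk_of_burnt i b hbi
    refine ⟨_, q.concat hadj.symm, ?_, rfl⟩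
    intro x hx hxv
    rw [Walk.support_concat, List.mem_append] at hx
    rcases hx with hx | hx
    · exact Set.mem_iUnion.2 ⟨i, hq x hx⟩
    · simp only [List.mem_singleton] at hx
      exact absurd hx hxv
  set n := Nat.find hPne with hn
  obtain ⟨p₀, hp₀, hlen₀⟩ := Nat.find_spec hPne
  have hminlen : ∀ q : G.Walk s v, (∀ x ∈ q.support, x ≠ v → x ∈ BurntSet G s S) →
      n ≤ q.length := by
    intro q hq
    by_contra hlt
    push_neg at hlt
    exact Nat.find_min hPne hlt ⟨q, hq, rfl⟩
  set p := p₀.bypass with hp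
  have hpP : ∀ x ∈ p.support, x ≠ v → x ∈ BurntSet G s S :=
    fun x hx => hp₀ x (Walk.support_bypass_subset _ hx)
  have hplen : p.length = n := by
    refine le_antisymm ?_ (hminlen p hpP)
    rw [hn, ← hlen₀]
    exact Walk.length_bypass_le _
  have hpath : p.IsPath := Walk.bypass_isPath _
  refine ⟨p, ⟨hpath, ?_⟩, ?_, hpP⟩
  · intro x hxs y hys hadj2
    by_contra hns
    obtain ⟨q, hql, hqs⟩ := exists_shorter_of_chord hpath hxs hys hadj2 hns
    have := hminlen q (fun z hz hzv => hpP z (hqs hz) hzv)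
    omega
  · rw [Walk.length_support]
    suffices hsl : S.length ≤ p.length by omega
    by_contra hlt
    push_neg at hlt
    obtain ⟨c, hvc, r, hr⟩ := Walk.exists_eq_cons_of_ne hvs p.reverse
    have hrs : r.support ⊆ p.support := by
      intro z hz
      have : z ∈ p.reverse.support := by rw [hr, Walk.support_cons]; exact List.mem_cons_of_mem _ hz
      rwa [Walk.support_reverse, List.mem_reverse] at this
    have hvnr : v ∉ r.support := by
      have hnd : p.reverse.support.Nodup := by
        rw [Walk.support_reverse]; exact List.nodup_reverse.mpr hpath.support_nodup
      rw [hr, Walk.support_cons] at hnd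
      exact (List.nodup_cons.mp hnd).1
    have hrnotS : ∀ z ∈ r.support, z ∉ S := by
      intro z hz
      have hzB : z ∈ BurntSet G s S :=
        hpP z (hrs hz) (fun h => hvnr (h ▸ hz))
      exact fun hzS => hSB z hzS hzB
    have hc : c ∈ burnt G s S r.length := mem_burnt_of_walk r hrnotS
    have hrl : r.length + 1 = p.length := by
      have := Walk.length_reverse p
      rw [hr, Walk.length_cons] at this
      omega
    -- p.length ≥ 1, so S.length ≥ 2
    have ht2 : 2 ≤ S.length := by omega
    have hc2 : c ∈ burnt G s S (S.length - 2) := burnt_mono (by omega) hc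
    have hvtake : v ∉ S.take (S.length - 1) := by
      have hnd := hval.1
      conv at hnd => rw [← List.dropLast_append_getLast hne]
      have hdisj := (List.nodup_append'.mp hnd).2.2
      rw [← List.dropLast_eq_take]
      exact fun h => hdisj h (by simp [hv])
    have hvmem : v ∈ burnt G s S (S.length - 1) := by
      have : v ∈ burnt G s S ((S.length - 2) + 1) := by
        refine Set.mem_union_right _ ⟨?_, c, hc2, hvc⟩
        rw [show S.length - 2 + 1 = S.length - 1 by omega]
        exact hvtake
      rwa [show S.length - 2 + 1 = S.length - 1 by omega] at this
    have hget : S.get ⟨S.length - 1, by omega⟩ = v := by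
      simp only [List.get_eq_getElem, hv, List.getLast_eq_getElem]
    exact hval.2 (S.length - 1) (by omega) (hget ▸ hvmem)
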